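/- Let O be a complete discrete valuation ring with uniformizer π, algebraically closed residue field k of characteristic p, and let σ be a ring automorphism of O fixing π and inducing a positive power of Frobenius on k. If A ∈ GL_m(O) and C ∈ GL_m(O) satisfy A - C⁻¹σ(C) ∈ π^n · M_m(O) for some n ≥ 1, then there exists C' ∈ GL_m(O) with C - C' ∈ π^n · M_m(O) and A - C'⁻¹σ(C') ∈ π^{n+1} · M_m(O). -/

import Mathlib

open IsLocalRing

theorem aux_root_stmt2 (k : Type*) [Field k] [IsAlgClosed k] (q : ℕ) (hq : 2 ≤ q)
    (c : k) : ∃ t : k, t ^ q - t = c := by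
  have hd : (Polynomial.X ^ q - Polynomial.X - Polynomial.C c : Polynomial k).degree = q := by
    rw [sub_sub, Polynomial.degree_sub_eq_left_of_degree_lt]
    · exact Polynomial.degree_X_pow q
    · rw [Polynomial.degree_X_pow]
      refine lt_of_le_of_lt (Polynomial.degree_add_le _ _) (max_lt ?_ ?_)
      · rw [Polynomial.degree_X]; exact_mod_cast by omega
      · exact lt_of_le_of_lt Polynomial.degree_C_le (by exact_mod_cast (by omega : 0 < q))
  obtain ⟨t, ht⟩ := IsAlgClosed.exists_root (Polynomial.X ^ q - Polynomial.X - Polynomial.C c)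
    (by rw [hd]; exact_mod_cast by omega)
  refine ⟨t, ?_⟩
  have h := ht
  simp only [Polynomial.IsRoot, Polynomial.eval_sub, Polynomial.eval_pow, Polynomial.eval_X,
    Polynomial.eval_C, sub_eq_zero] at h
  exact h

theorem stmt_2 (p : ℕ) [Fact p.Prime]
    (O : Type*) [CommRing O] [IsDomain O] [IsDiscreteValuationRing O]
    [IsAdicComplete (maximalIdeal O) O]
    [IsAlgClosed (ResidueField O)] [CharP (ResidueField O) p]
    (π : O) (hπ : Irreducible π)
    (σ : O ≃+* O) (hσπ : σ π = π)
    (z : ℕ) (hz : 1 ≤ z) (q : ℕ) (hq : q = p ^ z)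
    (hσres : ∀ x : O, residue O (σ x) = residue O x ^ q)
    (m : ℕ) (A C : GL (Fin m) O) (n : ℕ) (hn : 1 ≤ n)
    (hAC : ∀ i j, ((A : Matrix (Fin m) (Fin m) O)
        - (↑C⁻¹ : Matrix (Fin m) (Fin m) O) * (C : Matrix (Fin m) (Fin m) O).map σ) i j
        ∈ Ideal.span {π} ^ n) :
    ∃ C' : GL (Fin m) O,
      (∀ i j, ((C : Matrix (Fin m) (Fin m) O) - (C' : Matrix (Fin m) (Fin m) O)) i j
          ∈ Ideal.span {π} ^ n) ∧
      (∀ i j, ((A : Matrix (Fin m) (Fin m) O)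
          - (↑C'⁻¹ : Matrix (Fin m) (Fin m) O) * (C' : Matrix (Fin m) (Fin m) O).map σ) i j
          ∈ Ideal.span {π} ^ (n + 1)) := by
  classical
  -- basic facts
  have hq2 : 2 ≤ q := by
    have := (Fact.out : p.Prime).two_le
    calc 2 ≤ p := this
    _ ≤ p ^ z := Nat.le_self_pow (by omega) p
    _ = q := hq.symm
  have hres_pi : residue O π = 0 := by
    exact (Ideal.Quotient.eq_zero_iff_mem).mpr (hπ.maximalIdeal_eq ▸ Ideal.mem_span_singleton_self π)
  have hdvd_of_res : ∀ x : O, residue O x = 0 → π ∣ x := by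
    intro x hx
    rw [← Ideal.mem_span_singleton, ← hπ.maximalIdeal_eq]
    exact (Ideal.Quotient.eq_zero_iff_mem).mp hx
  have hmem_iff : ∀ (r : ℕ) (x : O), x ∈ Ideal.span {π} ^ r ↔ π ^ r ∣ x := by
    intro r x
    rw [Ideal.span_singleton_pow, Ideal.mem_span_singleton]
  -- matrices
  set Cv : Matrix (Fin m) (Fin m) O := (C : Matrix (Fin m) (Fin m) O) with hCv
  set Cinv : Matrix (Fin m) (Fin m) O := (↑C⁻¹ : Matrix (Fin m) (Fin m) O) with hCinv
  set sC : Matrix (Fin m) (Fin m) O := Cv.map σ with hsC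
  set sCinv : Matrix (Fin m) (Fin m) O := Cinv.map σ with hsCinv
  have hmapmul : ∀ M N : Matrix (Fin m) (Fin m) O, (M * N).map ⇑σ = M.map ⇑σ * N.map ⇑σ := by
    intro M N
    have h := Matrix.map_mul (L := M) (M := N) (f := (σ : O →+* O))
    simpa using h
  have hCC : Cinv * Cv = 1 := C.inv_mul
  have hsCC : sCinv * sC = 1 := by
    rw [hsC, hsCinv, ← hmapmul, hCC]
    exact Matrix.map_one _ (map_zero σ) (map_one σ)
  have hCsC : sC * sCinv = 1 := by
    rw [hsC, hsCinv, ← hmapmul, C.mul_inv]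
    exact Matrix.map_one _ (map_zero σ) (map_one σ)
  -- X with A - Cinv * sC = π^n • X
  have hX0 : ∀ i j, ∃ x : O, ((A : Matrix (Fin m) (Fin m) O) - Cinv * sC) i j = π ^ n * x := by
    intro i j
    obtain ⟨x, hx⟩ := (hmem_iff n _).mp (hAC i j)
    exact ⟨x, hx⟩
  choose Xf hXf using hX0
  set X : Matrix (Fin m) (Fin m) O := Matrix.of Xf with hXdef
  have hA : (A : Matrix (Fin m) (Fin m) O) = Cinv * sC + π ^ n • X := by
    have : (A : Matrix (Fin m) (Fin m) O) - Cinv * sC = π ^ n • X := by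
      ext i j
      simpa [X, Matrix.smul_apply, smul_eq_mul] using hXf i j
    linear_combination (norm := abel) this
  -- Z and Y
  set Z : Matrix (Fin m) (Fin m) O := Cv * X * sCinv with hZdef
  have hY0 : ∀ i j, ∃ y : O, π ∣ (σ y - y - Z i j) := by
    intro i j
    obtain ⟨t, ht⟩ := aux_root_stmt2 (ResidueField O) q hq2 (residue O (Z i j))
    obtain ⟨y, hy⟩ := Ideal.Quotient.mk_surjective t
    refine ⟨y, hdvd_of_res _ ?_⟩
    have : residue O y = t := hy
    rw [map_sub, map_sub, hσres, this, ht, sub_self]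
  choose Yf hYf using hY0
  set Y : Matrix (Fin m) (Fin m) O := Matrix.of Yf with hYdef
  have hW0 : ∀ i j, ∃ w : O, σ (Y i j) - Y i j - Z i j = π * w := (fun i j => hYf i j)
  choose Wf hWf using hW0
  set W : Matrix (Fin m) (Fin m) O := Matrix.of Wf with hWdef
  have hYσ : Y.map σ = Y + Z + π • W := by
    ext i j
    have := hWf i j
    simp only [Matrix.map_apply, Matrix.add_apply, Matrix.smul_apply, smul_eq_mul, hWdef,
      Matrix.of_apply]
    linear_combination this
  -- the unit U = 1 + π^n • Y
  set U : Matrix (Fin m) (Fin m) O := 1 + π ^ n • Y with hUdef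
  have hUdet : IsUnit U.det := by
    have hres : residue O U.det = 1 := by
      have : U.map (residue O) = (1 : Matrix (Fin m) (Fin m) (ResidueField O)) := by
        ext i j
        simp only [Matrix.map_apply, hUdef, Matrix.add_apply, Matrix.smul_apply, smul_eq_mul,
          map_add, map_mul, map_pow, hres_pi]
        rcases eq_or_ne i j with h | h <;>
          simp [Matrix.one_apply, h, zero_pow (by omega : n ≠ 0)]
      rw [RingHom.map_det, RingHom.mapMatrix_apply, this, Matrix.det_one]
    by_contra hu
    have hmem : U.det ∈ maximalIdeal O := hu
    have h0 : residue O U.det = 0 := Ideal.Quotient.eq_zero_iff_mem.mpr hmem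
    rw [h0] at hres
    exact zero_ne_one hres
  have hUinvtble : IsUnit U := (Matrix.isUnit_iff_isUnit_det U).mpr hUdet
  set uU : (Matrix (Fin m) (Fin m) O)ˣ := hUinvtble.unit with huU
  have huUval : (uU : Matrix (Fin m) (Fin m) O) = U := hUinvtble.unit_spec
  set C' : GL (Fin m) O := uU * C with hC'def
  set Uinv : Matrix (Fin m) (Fin m) O := ((uU⁻¹ : (Matrix (Fin m) (Fin m) O)ˣ) :
      Matrix (Fin m) (Fin m) O) with hUinv
  have hUiU : Uinv * U = 1 := by rw [hUinv, ← huUval]; exact uU.inv_mul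
  have hC'val : (C' : Matrix (Fin m) (Fin m) O) = U * Cv := by
    rw [hC'def, Units.val_mul, huUval]
  have hC'inv : (↑C'⁻¹ : Matrix (Fin m) (Fin m) O) = Cinv * Uinv := by
    rw [hC'def, mul_inv_rev, Units.val_mul]
  refine ⟨C', ?_, ?_⟩
  · intro i j
    rw [hmem_iff]
    have h : Cv - (C' : Matrix (Fin m) (Fin m) O) = -(π ^ n • (Y * Cv)) := by
      rw [hC'val, hUdef, add_mul, one_mul, Matrix.smul_mul]
      abel
    rw [h]
    simp only [Matrix.neg_apply, Matrix.smul_apply, smul_eq_mul]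
    exact (dvd_neg).mpr (Dvd.intro _ rfl)
  · intro i j
    -- main computation
    have hσpow : σ (π ^ n) = π ^ n := by rw [map_pow, hσπ]
    have hmapsmul : ∀ (r : O) (M : Matrix (Fin m) (Fin m) O), σ r = r →
        (r • M).map σ = r • (M.map σ) := by
      intro r M hr
      ext a b
      simp [Matrix.map_apply, Matrix.smul_apply, smul_eq_mul, map_mul, hr]
    have hUmap : U.map σ = U + π ^ n • Z + π ^ (n+1) • W := by
      have h1 : U.map σ = 1 + π ^ n • (Y.map σ) := by
        rw [hUdef]
        have : (1 + π ^ n • Y).map σ = (1 : Matrix (Fin m) (Fin m) O).map σ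
            + ((π ^ n • Y).map σ) := by
          ext a b; simp only [Matrix.map_apply, Matrix.add_apply, map_add]
        rw [this, Matrix.map_one _ (map_zero σ) (map_one σ), hmapsmul _ _ hσpow]
      rw [h1, hYσ]
      rw [hUdef]
      rw [smul_add, smul_add, smul_smul, ← pow_succ]
      abel
    have hC'map : (C' : Matrix (Fin m) (Fin m) O).map σ
        = (U + π ^ n • Z + π ^ (n+1) • W) * sC := by
      rw [hC'val, ← hUmap, hsC, ← hmapmul]
    have hZsC : Z * sC = Cv * X := by
      rw [hZdef, mul_assoc (Cv * X), hsCC, mul_one]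
    have hUinv_eq : Uinv = 1 - π ^ n • (Uinv * Y) := by
      have := hUiU
      rw [hUdef, mul_add, mul_one, Matrix.mul_smul] at this
      linear_combination (norm := abel) this
    -- expand V * σ(C')
    have hmain : (A : Matrix (Fin m) (Fin m) O)
        - (↑C'⁻¹ : Matrix (Fin m) (Fin m) O) * (C' : Matrix (Fin m) (Fin m) O).map σ
        = π ^ n • (π ^ n • (Cinv * (Uinv * (Y * (Cv * X)))))
          - π ^ (n+1) • (Cinv * (Uinv * (W * sC))) := by
      rw [hC'inv, hC'map, hA]
      calc Cinv * sC + π ^ n • X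
            - Cinv * Uinv * ((U + π ^ n • Z + π ^ (n+1) • W) * sC)
          = Cinv * sC + π ^ n • X
            - (Cinv * (Uinv * U) * sC + π ^ n • (Cinv * (Uinv * (Z * sC)))
              + π ^ (n+1) • (Cinv * (Uinv * (W * sC)))) := by
            simp only [add_mul, mul_add, Matrix.smul_mul, Matrix.mul_smul, mul_assoc]
      _ = π ^ n • X - π ^ n • (Cinv * (Uinv * (Cv * X)))
            - π ^ (n+1) • (Cinv * (Uinv * (W * sC))) := by
            rw [hUiU, mul_one, hZsC]
            abel
      _ = π ^ n • (π ^ n • (Cinv * (Uinv * (Y * (Cv * X)))))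
            - π ^ (n+1) • (Cinv * (Uinv * (W * sC))) := by
            have : Uinv * (Cv * X) = Cv * X - π ^ n • (Uinv * (Y * (Cv * X))) := by
              nth_rewrite 1 [hUinv_eq]
              simp only [sub_mul, one_mul, Matrix.smul_mul, mul_assoc]
            rw [this]
            rw [mul_sub, Matrix.mul_smul, ← mul_assoc Cinv Cv X, hCC, one_mul]
            rw [smul_sub]
            abel
    rw [hmain, hmem_iff]
    simp only [Matrix.sub_apply, Matrix.smul_apply, smul_eq_mul]
    refine dvd_sub ?_ ?_
    · rw [← mul_assoc, ← pow_add]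
      exact Dvd.dvd.mul_right (pow_dvd_pow π (by omega)) _
    · exact Dvd.intro _ rfl
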